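/- Let k ≥ 1, let c be a positive real number, and let r be the least positive real root of the polynomial 1 - x^(k-1) - c·x^k. Then every complex root z of this polynomial with |z| = r satisfies z = r; that is, r is the unique root of minimal modulus on its circle. -/

import Mathlib

/-- If r is the least positive real root of 1 - x^(k-1) - c x^k (c > 0), then every
complex root of modulus r equals r. -/
theorem unique_root_on_circle (k : ℕ) (hk : 1 ≤ k) (c r : ℝ) (hc : 0 < c) (hr : 0 < r)
    (hroot : 1 - r ^ (k - 1) - c * r ^ k = 0)
    (hleast : ∀ s : ℝ, 0 < s → 1 - s ^ (k - 1) - c * s ^ k = 0 → r ≤ s) :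
    ∀ z : ℂ, 1 - z ^ (k - 1) - (c : ℂ) * z ^ k = 0 → ‖z‖ = r → z = (r : ℂ) := by
  intro z hz habs
  set a : ℂ := z ^ (k - 1) with ha
  set b : ℂ := (c : ℂ) * z ^ k with hb
  have hab : a + b = 1 := by rw [ha, hb]; linear_combination -hz
  have hna : ‖a‖ = r ^ (k - 1) := by
    rw [ha, norm_pow, habs]
  have hnb : ‖b‖ = c * r ^ k := by
    rw [hb, norm_mul, norm_pow, Complex.norm_real, Real.norm_eq_abs, abs_of_pos hc,
      habs]
  have hsum : ‖a + b‖ = ‖a‖ + ‖b‖ := by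
    rw [hab, hna, hnb]
    simp only [norm_one]
    linarith
  have hray : SameRay ℝ a b := by
    rwa [sameRay_iff_norm_add]
  have ha0 : a ≠ 0 := by
    intro h
    rw [h, norm_zero] at hna
    have := pow_pos hr (k - 1)
    linarith
  obtain ⟨t, ht0, hta⟩ := hray.exists_nonneg_left ha0
  -- (1 + t) • a = 1
  have h1 : ((1 + t : ℝ)) • a = 1 := by
    rw [add_smul, one_smul, hta, hab]
  have h1t : (0:ℝ) < 1 + t := by linarith
  rw [Complex.real_smul] at h1
  have haval : a = (((1 + t : ℝ) : ℂ))⁻¹ :=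
    eq_inv_of_mul_eq_one_right h1
  -- so a is a positive real; its norm determines it
  have hareal : a = ((r ^ (k - 1) : ℝ) : ℂ) := by
    rw [haval]
    have hn : ‖(((1 + t : ℝ) : ℂ))⁻¹‖ = (1 + t)⁻¹ := by
      rw [norm_inv, Complex.norm_real, Real.norm_eq_abs, abs_of_pos h1t]
    rw [haval, hn] at hna
    rw [← hna, Complex.ofReal_inv]
  have hbreal : b = ((c * r ^ k : ℝ) : ℂ) := by
    have h2 : b = 1 - a := by linear_combination hab
    have h3 : c * r ^ k = 1 - r ^ (k - 1) := by linarith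
    rw [h2, hareal, h3]
    push_cast
    ring
  have hzk : z ^ k = ((r ^ k : ℝ) : ℂ) := by
    have : (c : ℂ) * z ^ k = (c : ℂ) * ((r ^ k : ℝ) : ℂ) := by
      rw [← hb, hbreal]; push_cast; ring
    exact mul_left_cancel₀ (by exact_mod_cast hc.ne') this
  have hkey : a * z = z ^ k := by
    rw [ha, ← pow_succ]
    congr 1
    omega
  have hrk : a * z = a * (r : ℂ) := by
    rw [hkey, hzk, hareal]
    push_cast
    rw [← pow_succ]
    congr 1
    omega
  exact mul_left_cancel₀ ha0 hrk
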